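/- For pairwise distinct sites i, j, k, the triple identity-by-state probability satisfies the recurrence φ_ijk = u³·(1/n²)·S₃ + u²·(1/n²)·S₂ + 3u²(1−u)·(1/n²)·S₃ + u·(1/n)·[ φ_jk·Σ_{(R,α) : {i,j,k}∩R = {i}} p°_{(R,α)} + φ_ik·Σ_{(R,α) : {i,j,k}∩R = {j}} p°_{(R,α)} + φ_ij·Σ_{(R,α) : {i,j,k}∩R = {k}} p°_{(R,α)} ] + u(1−u)·(1/n)·Σ_{(R,α) : {i,j,k}∩R = {j,k}} p°_{(R,α)}·(φ_{iα(j)} + φ_{iα(k)}) + u(1−u)·(1/n)·Σ_{(R,α) : {i,j,k}∩R = {i,k}} p°_{(R,α)}·(φ_{α(i)j} + φ_{jα(k)}) + u(1−u)·(1/n)·Σ_{(R,α) : {i,j,k}∩R = {i,j}} p°_{(R,α)}·(φ_{α(i)k} + φ_{α(j)k}) + u(1−u)²·(1/n)·Σ_{(R,α) : |{i,j,k}∩R| = 3} p°_{(R,α)}·(φ_{α(i)α(j)} + φ_{α(i)α(k)} + φ_{α(j)α(k)}) + Σ_{(R,α)} p°_{(R,α)}·(1−u)^{|{i,j,k}∩R|}·φ_{α̃(i)α̃(j)α̃(k)},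 where S₃ := Σ_{(R,α) : |{i,j,k}∩R| = 3} p°_{(R,α)} and S₂ := Σ_{(R,α) : |{i,j,k}∩R| = 2} p°_{(R,α)}; moreover, together with the pairwise probabilities {φ_ij}, these equations uniquely determine {φ_ijk}_{i,j,k=1}^N. -/

import Mathlib

open Finset

namespace SCT

abbrev Event (N : ℕ) := Finset (Fin N) × (Fin N → Fin N)

/-- The extension `α̃` of the parentage map of a replacement event:
it equals `α` on `R` and the identity off `R`. -/
def extMap {N : ℕ} (E : Event N) : Fin N → Fin N :=
  fun i => if i ∈ E.1 then E.2 i else i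

/-- Transition probabilities of the mutation–selection Markov chain on states
`Fin N → Fin n`, for a replacement rule `p` and mutation probability `u`. -/
noncomputable def transMat (N n : ℕ) (p : Event N → ℝ) (u : ℝ)
    (x y : Fin N → Fin n) : ℝ :=
  ∑ E : Event N, p E *
    (∏ i ∈ E.1, ((1 - u) * (if y i = x (E.2 i) then (1:ℝ) else 0) + u / (n:ℝ))) *
    (∏ i ∈ E.1ᶜ, (if y i = x i then (1:ℝ) else 0))

def IsDist {α : Type*} [Fintype α] (q : α → ℝ) : Prop :=
  (∀ a, 0 ≤ q a) ∧ ∑ a, q a = 1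

def IsStationary {N n : ℕ} (P : (Fin N → Fin n) → (Fin N → Fin n) → ℝ)
    (π : (Fin N → Fin n) → ℝ) : Prop :=
  IsDist π ∧ ∀ y, ∑ x, π x * P x y = π y

/-- Fixation axiom: some site `i` can propagate its lineage through the whole
population via finitely many replacement events of positive probability. -/
def FixationAxiom {N : ℕ} (p : Event N → ℝ) : Prop :=
  ∃ (i : Fin N) (m : ℕ) (E : Fin m → Event N), 1 ≤ m ∧
    (∀ k, 0 < p (E k)) ∧ (∃ k, i ∈ (E k).1) ∧
    ∀ j, ((List.ofFn (fun k => extMap (E k))).foldr (· ∘ ·) id) j = i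

/-- Pairwise identity-by-state probability under the distribution `π`. -/
noncomputable def phi2 {N n : ℕ} (π : (Fin N → Fin n) → ℝ) (i j : Fin N) : ℝ :=
  ∑ x, π x * (if x i = x j then (1:ℝ) else 0)

/-- Triple identity-by-state probability under the distribution `π`. -/
noncomputable def phi3 {N n : ℕ} (π : (Fin N → Fin n) → ℝ) (i j k : Fin N) : ℝ :=
  ∑ x, π x * (if x i = x j ∧ x j = x k then (1:ℝ) else 0)

/-- Right-hand side of the recurrence for the triple identity-by-state
probabilities of three pairwise-distinct sites `i`, `j`, `k`. -/
noncomputable def tripleRHS {N : ℕ} (n : ℕ) (p : Event N → ℝ) (u : ℝ)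
    (φ2 : Fin N → Fin N → ℝ) (φ3 : Fin N → Fin N → Fin N → ℝ)
    (i j k : Fin N) : ℝ :=
  u^3 * (1/(n:ℝ)^2) *
    (∑ E ∈ univ.filter
      (fun E : Event N => (({i, j, k} : Finset (Fin N)) ∩ E.1).card = 3), p E)
  + u^2 * (1/(n:ℝ)^2) *
    (∑ E ∈ univ.filter
      (fun E : Event N => (({i, j, k} : Finset (Fin N)) ∩ E.1).card = 2), p E)
  + 3 * u^2 * (1-u) * (1/(n:ℝ)^2) *
    (∑ E ∈ univ.filter
      (fun E : Event N => (({i, j, k} : Finset (Fin N)) ∩ E.1).card = 3), p E)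
  + u * (1/(n:ℝ)) *
      (φ2 j k * (∑ E ∈ univ.filter
          (fun E : Event N => ({i, j, k} : Finset (Fin N)) ∩ E.1 = {i}), p E)
        + φ2 i k * (∑ E ∈ univ.filter
          (fun E : Event N => ({i, j, k} : Finset (Fin N)) ∩ E.1 = {j}), p E)
        + φ2 i j * (∑ E ∈ univ.filter
          (fun E : Event N => ({i, j, k} : Finset (Fin N)) ∩ E.1 = {k}), p E))
  + u * (1-u) * (1/(n:ℝ)) *
      (∑ E ∈ univ.filter
        (fun E : Event N => ({i, j, k} : Finset (Fin N)) ∩ E.1 = {j, k}),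
          p E * (φ2 i (E.2 j) + φ2 i (E.2 k)))
  + u * (1-u) * (1/(n:ℝ)) *
      (∑ E ∈ univ.filter
        (fun E : Event N => ({i, j, k} : Finset (Fin N)) ∩ E.1 = {i, k}),
          p E * (φ2 (E.2 i) j + φ2 j (E.2 k)))
  + u * (1-u) * (1/(n:ℝ)) *
      (∑ E ∈ univ.filter
        (fun E : Event N => ({i, j, k} : Finset (Fin N)) ∩ E.1 = {i, j}),
          p E * (φ2 (E.2 i) k + φ2 (E.2 j) k))
  + u * (1-u)^2 * (1/(n:ℝ)) *
      (∑ E ∈ univ.filter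
        (fun E : Event N => (({i, j, k} : Finset (Fin N)) ∩ E.1).card = 3),
          p E * (φ2 (E.2 i) (E.2 j) + φ2 (E.2 i) (E.2 k) + φ2 (E.2 j) (E.2 k)))
  + ∑ E : Event N,
      p E * (1-u)^((({i, j, k} : Finset (Fin N)) ∩ E.1).card) *
        φ3 (extMap E i) (extMap E j) (extMap E k)

variable {N n : ℕ}

noncomputable def wB {N : ℕ} (u : ℝ) (E : Event N) (l : Fin N) : ℝ :=
  if l ∈ E.1 then 1-u else 1
noncomputable def wC {N : ℕ} (n : ℕ) (u : ℝ) (E : Event N) (l : Fin N) : ℝ :=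
  if l ∈ E.1 then u/(n:ℝ) else 0
variable {N n : ℕ}

-- step 1: integrand as full product
lemma prod_form (u : ℝ) (E : Event N) (x y : Fin N → Fin n) :
    (∏ l ∈ E.1, ((1 - u) * (if y l = x (E.2 l) then (1:ℝ) else 0) + u / (n:ℝ))) *
      (∏ l ∈ E.1ᶜ, (if y l = x l then (1:ℝ) else 0))
    = ∏ l : Fin N, (wB u E l * (if y l = x (extMap E l) then (1:ℝ) else 0) + wC n u E l) := by
  rw [← Finset.prod_mul_prod_compl E.1]
  congr 1
  · exact Finset.prod_congr rfl fun l hl => by simp [wB, wC, extMap, hl]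
  · refine Finset.prod_congr rfl fun l hl => ?_
    rw [Finset.mem_compl] at hl
    simp [wB, wC, extMap, hl]

lemma sum_ind3 (a b c : Fin n) :
    ∑ v : Fin n, (if a = v then (1:ℝ) else 0) *
      ((if b = v then (1:ℝ) else 0) * (if c = v then (1:ℝ) else 0))
      = if a = b ∧ b = c then 1 else 0 := by
  by_cases h : a = b ∧ b = c
  · obtain ⟨h1, h2⟩ := h; subst h1; subst h2; simp [← ite_and]
  · rw [if_neg h]
    refine Finset.sum_eq_zero fun v _ => ?_
    by_cases h1 : a = v <;> by_cases h2 : b = v <;> by_cases h3 : c = v <;> simp_all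

-- step 2: indicator decomposition
lemma ind3_form {i j k : Fin N} (hij : i ≠ j) (hik : i ≠ k) (hjk : j ≠ k)
    (y : Fin N → Fin n) :
    (if y i = y j ∧ y j = y k then (1:ℝ) else 0)
    = ∑ v : Fin n, ∏ l ∈ ({i, j, k} : Finset (Fin N)), (if y l = v then (1:ℝ) else 0) := by
  have hprod : ∀ v : Fin n, ∏ l ∈ ({i, j, k} : Finset (Fin N)), (if y l = v then (1:ℝ) else 0)
      = (if y i = v then (1:ℝ) else 0) *
        ((if y j = v then (1:ℝ) else 0) * (if y k = v then (1:ℝ) else 0)) := by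
    intro v
    rw [show ({i, j, k} : Finset (Fin N)) = insert i (insert j {k}) from rfl,
      Finset.prod_insert (by simp [hij, hik]), Finset.prod_insert (by simp [hjk]),
      Finset.prod_singleton]
  rw [Finset.sum_congr rfl fun v _ => hprod v, sum_ind3]

lemma fin_sum_mul_ind (v : Fin n) (f : Fin n → ℝ) :
    ∑ w : Fin n, f w * (if w = v then (1:ℝ) else 0) = f v := by
  simp [mul_ite]

lemma sum_f_eq_one (hn : 1 ≤ n) (u : ℝ) (E : Event N) (x : Fin N → Fin n) (l : Fin N) :
    ∑ w : Fin n, (wB u E l * (if w = x (extMap E l) then (1:ℝ) else 0) + wC n u E l) = 1 := by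
  have hn0 : (n:ℝ) ≠ 0 := by positivity
  rw [Finset.sum_add_distrib, Finset.sum_const, card_univ, Fintype.card_fin,
    ← Finset.mul_sum, Finset.sum_ite_eq' univ (x (extMap E l)) (fun _ => (1:ℝ))]
  by_cases h : l ∈ E.1 <;> simp [wB, wC, h] <;> field_simp <;> ring

lemma event_sum (hn : 1 ≤ n) (u : ℝ) (E : Event N) (x : Fin N → Fin n)
    {i j k : Fin N} (hij : i ≠ j) (hik : i ≠ k) (hjk : j ≠ k) :
    ∑ y : Fin N → Fin n,
      ((∏ l ∈ E.1, ((1 - u) * (if y l = x (E.2 l) then (1:ℝ) else 0) + u / (n:ℝ))) *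
       (∏ l ∈ E.1ᶜ, (if y l = x l then (1:ℝ) else 0))) *
      (if y i = y j ∧ y j = y k then (1:ℝ) else 0)
    = ∑ v : Fin n,
        (wB u E i * (if x (extMap E i) = v then (1:ℝ) else 0) + wC n u E i) *
        ((wB u E j * (if x (extMap E j) = v then (1:ℝ) else 0) + wC n u E j) *
         (wB u E k * (if x (extMap E k) = v then (1:ℝ) else 0) + wC n u E k)) := by
  set T : Finset (Fin N) := {i, j, k} with hT
  set f : Fin N → Fin n → ℝ :=
    fun l w => wB u E l * (if w = x (extMap E l) then (1:ℝ) else 0) + wC n u E l with hf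
  have step1 : ∀ y : Fin N → Fin n,
      ((∏ l ∈ E.1, ((1 - u) * (if y l = x (E.2 l) then (1:ℝ) else 0) + u / (n:ℝ))) *
       (∏ l ∈ E.1ᶜ, (if y l = x l then (1:ℝ) else 0))) *
      (if y i = y j ∧ y j = y k then (1:ℝ) else 0)
      = ∑ v : Fin n, ∏ l : Fin N,
          (f l (y l) * (if l ∈ T then (if y l = v then (1:ℝ) else 0) else 1)) := by
    intro y
    rw [prod_form, ind3_form hij hik hjk y, Finset.mul_sum]
    refine Finset.sum_congr rfl fun v _ => ?_
    rw [Finset.prod_mul_distrib, Finset.prod_ite_mem univ T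
      (fun l => if y l = v then (1:ℝ) else 0), Finset.univ_inter]
  rw [Finset.sum_congr rfl fun y _ => step1 y, Finset.sum_comm]
  refine Finset.sum_congr rfl fun v _ => ?_
  rw [show (∑ y : Fin N → Fin n, ∏ l : Fin N,
      (f l (y l) * (if l ∈ T then (if y l = v then (1:ℝ) else 0) else 1)))
    = ∏ l : Fin N, ∑ w : Fin n,
      (f l w * (if l ∈ T then (if w = v then (1:ℝ) else 0) else 1)) from by
    rw [Finset.prod_univ_sum (fun _ => (univ : Finset (Fin n)))
      (fun l w => f l w * (if l ∈ T then (if w = v then (1:ℝ) else 0) else 1)),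
      Fintype.piFinset_univ]]
  have hone : ∀ l : Fin N, l ∉ T →
      ∑ w : Fin n, (f l w * (if l ∈ T then (if w = v then (1:ℝ) else 0) else 1)) = 1 := by
    intro l hl
    simp only [if_neg hl, mul_one]
    exact sum_f_eq_one hn u E x l
  have hmem : ∀ l : Fin N, l ∈ T →
      ∑ w : Fin n, (f l w * (if l ∈ T then (if w = v then (1:ℝ) else 0) else 1)) = f l v := by
    intro l hl
    simp only [if_pos hl]
    exact fin_sum_mul_ind v (f l)
  rw [← Finset.prod_mul_prod_compl T, Finset.prod_congr rfl (fun l hl => hmem l hl),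
    Finset.prod_congr rfl (fun l hl => hone l (Finset.mem_compl.mp hl)),
    Finset.prod_const_one, mul_one]
  rw [hT, Finset.prod_insert (by simp [hij, hik]), Finset.prod_insert (by simp [hjk]),
    Finset.prod_singleton]
  simp only [hf]
  congr 1 <;> [skip; congr 1] <;> · congr 2; exact if_congr eq_comm rfl rfl

lemma expand3 (b1 b2 b3 c1 c2 c3 : ℝ) (a1 a2 a3 : Fin n) :
    ∑ v : Fin n,
      (b1 * (if a1 = v then (1:ℝ) else 0) + c1) *
      ((b2 * (if a2 = v then (1:ℝ) else 0) + c2) *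
       (b3 * (if a3 = v then (1:ℝ) else 0) + c3))
    = b1*b2*b3*(if a1 = a2 ∧ a2 = a3 then (1:ℝ) else 0)
      + b1*b2*c3*(if a1 = a2 then (1:ℝ) else 0)
      + b1*c2*b3*(if a1 = a3 then (1:ℝ) else 0)
      + c1*b2*b3*(if a2 = a3 then (1:ℝ) else 0)
      + (b1*c2*c3 + c1*b2*c3 + c1*c2*b3 + n*(c1*c2*c3)) := by
  have sum_ind2 : ∀ a b : Fin n,
      ∑ v : Fin n, (if a = v then (1:ℝ) else 0) * (if b = v then (1:ℝ) else 0)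
        = if a = b then 1 else 0 := by
    intro a b
    by_cases h : a = b
    · subst h; simp [← ite_and]
    · rw [if_neg h]
      refine Finset.sum_eq_zero fun v _ => ?_
      by_cases h1 : a = v <;> by_cases h2 : b = v <;> simp_all
  have key : ∀ v : Fin n,
      (b1 * (if a1 = v then (1:ℝ) else 0) + c1) *
      ((b2 * (if a2 = v then (1:ℝ) else 0) + c2) *
       (b3 * (if a3 = v then (1:ℝ) else 0) + c3))
      = b1*b2*b3*((if a1 = v then (1:ℝ) else 0) * ((if a2 = v then (1:ℝ) else 0) * (if a3 = v then (1:ℝ) else 0)))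
        + b1*b2*c3*((if a1 = v then (1:ℝ) else 0) * (if a2 = v then (1:ℝ) else 0))
        + b1*c2*b3*((if a1 = v then (1:ℝ) else 0) * (if a3 = v then (1:ℝ) else 0))
        + c1*b2*b3*((if a2 = v then (1:ℝ) else 0) * (if a3 = v then (1:ℝ) else 0))
        + (b1*c2*c3*(if a1 = v then (1:ℝ) else 0)
           + c1*b2*c3*(if a2 = v then (1:ℝ) else 0)
           + c1*c2*b3*(if a3 = v then (1:ℝ) else 0) + c1*c2*c3) := fun v => by ring
  have sum_ind1 : ∀ a : Fin n, ∑ v : Fin n, (if a = v then (1:ℝ) else 0) = 1 := by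
    intro a; simp
  rw [Finset.sum_congr rfl fun v _ => key v]
  simp only [Finset.sum_add_distrib, ← Finset.mul_sum]
  rw [sum_ind3, sum_ind2 a1 a2, sum_ind2 a1 a3, sum_ind2 a2 a3, sum_ind1, sum_ind1, sum_ind1,
    Finset.sum_const, card_univ, Fintype.card_fin, nsmul_eq_mul, mul_one]
  ring

lemma key_rec (hn : 1 ≤ n) (p : Event N → ℝ) (u : ℝ) (π : (Fin N → Fin n) → ℝ)
    (hπ1 : ∑ x, π x = 1) (hπ2 : ∀ y, ∑ x, π x * transMat N n p u x y = π y)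
    {i j k : Fin N} (hij : i ≠ j) (hik : i ≠ k) (hjk : j ≠ k) :
    phi3 π i j k = ∑ E : Event N, p E *
      (wB u E i * wB u E j * wB u E k *
          phi3 π (extMap E i) (extMap E j) (extMap E k)
        + wB u E i * wB u E j * wC n u E k * phi2 π (extMap E i) (extMap E j)
        + wB u E i * wC n u E j * wB u E k * phi2 π (extMap E i) (extMap E k)
        + wC n u E i * wB u E j * wB u E k * phi2 π (extMap E j) (extMap E k)
        + (wB u E i * wC n u E j * wC n u E k + wC n u E i * wB u E j * wC n u E k
           + wC n u E i * wC n u E j * wB u E k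
           + n * (wC n u E i * wC n u E j * wC n u E k))) := by
  have h0 : phi3 π i j k
      = ∑ x, π x * ∑ y, transMat N n p u x y * (if y i = y j ∧ y j = y k then (1:ℝ) else 0) := by
    unfold phi3
    rw [Finset.sum_congr rfl fun y (_ : y ∈ univ) => by rw [← hπ2 y]]
    rw [Finset.sum_congr rfl fun y (_ : y ∈ univ) => Finset.sum_mul _ _ _, Finset.sum_comm]
    exact Finset.sum_congr rfl fun x _ => by
      rw [Finset.mul_sum]
      exact Finset.sum_congr rfl fun y _ => by ring
  rw [h0]
  have h1 : ∀ x, ∑ y, transMat N n p u x y * (if y i = y j ∧ y j = y k then (1:ℝ) else 0)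
      = ∑ E : Event N, p E * ∑ v : Fin n,
        (wB u E i * (if x (extMap E i) = v then (1:ℝ) else 0) + wC n u E i) *
        ((wB u E j * (if x (extMap E j) = v then (1:ℝ) else 0) + wC n u E j) *
         (wB u E k * (if x (extMap E k) = v then (1:ℝ) else 0) + wC n u E k)) := by
    intro x
    unfold transMat
    rw [Finset.sum_congr rfl fun y (_ : y ∈ univ) => Finset.sum_mul _ _ _, Finset.sum_comm]
    refine Finset.sum_congr rfl fun E _ => ?_
    rw [← event_sum hn u E x hij hik hjk, Finset.mul_sum]
    exact Finset.sum_congr rfl fun y _ => by ring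
  rw [Finset.sum_congr rfl fun x (_ : x ∈ univ) => by rw [h1 x]]
  rw [Finset.sum_congr rfl fun x (_ : x ∈ univ) => Finset.mul_sum _ _ _, Finset.sum_comm]
  refine Finset.sum_congr rfl fun E _ => ?_
  have h2 : ∀ x : Fin N → Fin n, π x * (p E * ∑ v : Fin n,
        (wB u E i * (if x (extMap E i) = v then (1:ℝ) else 0) + wC n u E i) *
        ((wB u E j * (if x (extMap E j) = v then (1:ℝ) else 0) + wC n u E j) *
         (wB u E k * (if x (extMap E k) = v then (1:ℝ) else 0) + wC n u E k)))
      = p E * (wB u E i * wB u E j * wB u E k *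
            (π x * (if x (extMap E i) = x (extMap E j) ∧ x (extMap E j) = x (extMap E k) then (1:ℝ) else 0))
          + wB u E i * wB u E j * wC n u E k *
            (π x * (if x (extMap E i) = x (extMap E j) then (1:ℝ) else 0))
          + wB u E i * wC n u E j * wB u E k *
            (π x * (if x (extMap E i) = x (extMap E k) then (1:ℝ) else 0))
          + wC n u E i * wB u E j * wB u E k *
            (π x * (if x (extMap E j) = x (extMap E k) then (1:ℝ) else 0))
          + (wB u E i * wC n u E j * wC n u E k + wC n u E i * wB u E j * wC n u E k
             + wC n u E i * wC n u E j * wB u E k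
             + n * (wC n u E i * wC n u E j * wC n u E k)) * π x) := by
    intro x
    rw [expand3]
    ring
  rw [Finset.sum_congr rfl fun x (_ : x ∈ univ) => h2 x, ← Finset.mul_sum]
  congr 1
  simp only [Finset.sum_add_distrib, ← Finset.mul_sum, hπ1]
  rw [← phi3, ← phi2, ← phi2, ← phi2]
  ring

lemma ne_of_card {α : Type*} {s t : Finset α} (h : s.card ≠ t.card) : s ≠ t :=
  fun e => h (congrArg Finset.card e)

lemma pair_ne_left {a b c d : Fin N} (h1 : a ≠ c) (h2 : a ≠ d) :
    ({a, b} : Finset (Fin N)) ≠ {c, d} := by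
  intro h
  have : a ∈ ({c, d} : Finset (Fin N)) := h ▸ Finset.mem_insert_self a {b}
  simp at this; tauto

lemma pair_ne_right {a b c d : Fin N} (h1 : b ≠ c) (h2 : b ≠ d) :
    ({a, b} : Finset (Fin N)) ≠ {c, d} := by
  intro h
  have : b ∈ ({c, d} : Finset (Fin N)) :=
    h ▸ Finset.mem_insert_of_mem (Finset.mem_singleton_self b)
  simp at this; tauto

lemma sum_W_eq (hn : 1 ≤ n) (p : Event N → ℝ) (u : ℝ)
    (φ2 : Fin N → Fin N → ℝ) (φ3 : Fin N → Fin N → Fin N → ℝ)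
    {i j k : Fin N} (hij : i ≠ j) (hik : i ≠ k) (hjk : j ≠ k) :
    ∑ E : Event N, p E *
      (wB u E i * wB u E j * wB u E k *
          φ3 (extMap E i) (extMap E j) (extMap E k)
        + wB u E i * wB u E j * wC n u E k * φ2 (extMap E i) (extMap E j)
        + wB u E i * wC n u E j * wB u E k * φ2 (extMap E i) (extMap E k)
        + wC n u E i * wB u E j * wB u E k * φ2 (extMap E j) (extMap E k)
        + (wB u E i * wC n u E j * wC n u E k + wC n u E i * wB u E j * wC n u E k
           + wC n u E i * wC n u E j * wB u E k
           + n * (wC n u E i * wC n u E j * wC n u E k)))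
    = tripleRHS n p u φ2 φ3 i j k := by
  have hn0 : (n:ℝ) ≠ 0 := by positivity
  have hji : j ≠ i := hij.symm
  have hki : k ≠ i := hik.symm
  have hkj : k ≠ j := hjk.symm
  have cij : ({i, j} : Finset (Fin N)).card = 2 := Finset.card_pair hij
  have cik : ({i, k} : Finset (Fin N)).card = 2 := Finset.card_pair hik
  have cjk : ({j, k} : Finset (Fin N)).card = 2 := Finset.card_pair hjk
  have cijk : ({i, j, k} : Finset (Fin N)).card = 3 := by
    rw [show ({i, j, k} : Finset (Fin N)) = insert i {j, k} from rfl,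
      Finset.card_insert_of_notMem (by simp [hij, hik]), cjk]
  unfold tripleRHS
  simp only [Finset.sum_filter, mul_add, Finset.mul_sum, ← Finset.sum_add_distrib]
  refine Finset.sum_congr rfl fun E _ => ?_
  by_cases hi : i ∈ E.1 <;> by_cases hj : j ∈ E.1 <;> by_cases hk : k ∈ E.1
  · have hset : ({i, j, k} : Finset (Fin N)) ∩ E.1 = {i, j, k} := by
      rw [← Finset.filter_mem_eq_inter]
      simp [Finset.filter_insert, Finset.filter_singleton, hi, hj, hk]
    have n1 : ({i, j, k} : Finset (Fin N)) ≠ {i} := ne_of_card (by rw [cijk]; simp)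
    have n2 : ({i, j, k} : Finset (Fin N)) ≠ {j} := ne_of_card (by rw [cijk]; simp)
    have n3 : ({i, j, k} : Finset (Fin N)) ≠ {k} := ne_of_card (by rw [cijk]; simp)
    have n4 : ({i, j, k} : Finset (Fin N)) ≠ {j, k} := ne_of_card (by rw [cijk, cjk]; simp)
    have n5 : ({i, j, k} : Finset (Fin N)) ≠ {i, k} := ne_of_card (by rw [cijk, cik]; simp)
    have n6 : ({i, j, k} : Finset (Fin N)) ≠ {i, j} := ne_of_card (by rw [cijk, cij]; simp)
    simp only [hset, cijk, n1, n2, n3, n4, n5, n6, wB, wC, extMap, hi, hj, hk,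
      if_true, if_false, reduceIte, if_pos, if_neg]
    norm_num
    try ring
    try (field_simp; ring)
  · have hset : ({i, j, k} : Finset (Fin N)) ∩ E.1 = {i, j} := by
      rw [← Finset.filter_mem_eq_inter]
      simp [Finset.filter_insert, Finset.filter_singleton, hi, hj, hk]
    have n1 : ({i, j} : Finset (Fin N)) ≠ {i} := ne_of_card (by rw [cij]; simp)
    have n2 : ({i, j} : Finset (Fin N)) ≠ {j} := ne_of_card (by rw [cij]; simp)
    have n3 : ({i, j} : Finset (Fin N)) ≠ {k} := ne_of_card (by rw [cij]; simp)
    have n4 : ({i, j} : Finset (Fin N)) ≠ {j, k} := pair_ne_left hij hik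
    have n5 : ({i, j} : Finset (Fin N)) ≠ {i, k} := pair_ne_right hji hjk
    simp only [hset, cij, n1, n2, n3, n4, n5, wB, wC, extMap, hi, hj, hk,
      if_true, if_false, reduceIte, if_pos, if_neg]
    norm_num
    try ring
    try (field_simp; ring)
  · have hset : ({i, j, k} : Finset (Fin N)) ∩ E.1 = {i, k} := by
      rw [← Finset.filter_mem_eq_inter]
      simp [Finset.filter_insert, Finset.filter_singleton, hi, hj, hk]
    have n1 : ({i, k} : Finset (Fin N)) ≠ {i} := ne_of_card (by rw [cik]; simp)
    have n2 : ({i, k} : Finset (Fin N)) ≠ {j} := ne_of_card (by rw [cik]; simp)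
    have n3 : ({i, k} : Finset (Fin N)) ≠ {k} := ne_of_card (by rw [cik]; simp)
    have n4 : ({i, k} : Finset (Fin N)) ≠ {j, k} := pair_ne_left hij hik
    have n5 : ({i, k} : Finset (Fin N)) ≠ {i, j} := pair_ne_right hki hkj
    simp only [hset, cik, n1, n2, n3, n4, n5, wB, wC, extMap, hi, hj, hk,
      if_true, if_false, reduceIte, if_pos, if_neg]
    norm_num
    try ring
    try (field_simp; ring)
  · have hset : ({i, j, k} : Finset (Fin N)) ∩ E.1 = {i} := by
      rw [← Finset.filter_mem_eq_inter]
      simp [Finset.filter_insert, Finset.filter_singleton, hi, hj, hk]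
    have n2 : ({i} : Finset (Fin N)) ≠ {j} := by simp [hij]
    have n3 : ({i} : Finset (Fin N)) ≠ {k} := by simp [hik]
    have n4 : ({i} : Finset (Fin N)) ≠ {j, k} := ne_of_card (by rw [cjk]; simp)
    have n5 : ({i} : Finset (Fin N)) ≠ {i, k} := ne_of_card (by rw [cik]; simp)
    have n6 : ({i} : Finset (Fin N)) ≠ {i, j} := ne_of_card (by rw [cij]; simp)
    simp only [hset, n2, n3, n4, n5, n6, wB, wC, extMap, hi, hj, hk,
      Finset.card_singleton, if_true, if_false, reduceIte, if_pos, if_neg]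
    norm_num
    try ring
    try (field_simp; ring)
  · have hset : ({i, j, k} : Finset (Fin N)) ∩ E.1 = {j, k} := by
      rw [← Finset.filter_mem_eq_inter]
      simp [Finset.filter_insert, Finset.filter_singleton, hi, hj, hk]
    have n1 : ({j, k} : Finset (Fin N)) ≠ {i} := ne_of_card (by rw [cjk]; simp)
    have n2 : ({j, k} : Finset (Fin N)) ≠ {j} := ne_of_card (by rw [cjk]; simp)
    have n3 : ({j, k} : Finset (Fin N)) ≠ {k} := ne_of_card (by rw [cjk]; simp)
    have n5 : ({j, k} : Finset (Fin N)) ≠ {i, k} := pair_ne_left hji hjk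
    have n6 : ({j, k} : Finset (Fin N)) ≠ {i, j} := pair_ne_right hki hkj
    simp only [hset, cjk, n1, n2, n3, n5, n6, wB, wC, extMap, hi, hj, hk,
      if_true, if_false, reduceIte, if_pos, if_neg]
    norm_num
    try ring
    try (field_simp; ring)
  · have hset : ({i, j, k} : Finset (Fin N)) ∩ E.1 = {j} := by
      rw [← Finset.filter_mem_eq_inter]
      simp [Finset.filter_insert, Finset.filter_singleton, hi, hj, hk]
    have n1 : ({j} : Finset (Fin N)) ≠ {i} := by simp [hji]
    have n3 : ({j} : Finset (Fin N)) ≠ {k} := by simp [hjk]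
    have n4 : ({j} : Finset (Fin N)) ≠ {j, k} := ne_of_card (by rw [cjk]; simp)
    have n5 : ({j} : Finset (Fin N)) ≠ {i, k} := ne_of_card (by rw [cik]; simp)
    have n6 : ({j} : Finset (Fin N)) ≠ {i, j} := ne_of_card (by rw [cij]; simp)
    simp only [hset, n1, n3, n4, n5, n6, wB, wC, extMap, hi, hj, hk,
      Finset.card_singleton, if_true, if_false, reduceIte, if_pos, if_neg]
    norm_num
    try ring
    try (field_simp; ring)
  · have hset : ({i, j, k} : Finset (Fin N)) ∩ E.1 = {k} := by
      rw [← Finset.filter_mem_eq_inter]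
      simp [Finset.filter_insert, Finset.filter_singleton, hi, hj, hk]
    have n1 : ({k} : Finset (Fin N)) ≠ {i} := by simp [hki]
    have n2 : ({k} : Finset (Fin N)) ≠ {j} := by simp [hkj]
    have n4 : ({k} : Finset (Fin N)) ≠ {j, k} := ne_of_card (by rw [cjk]; simp)
    have n5 : ({k} : Finset (Fin N)) ≠ {i, k} := ne_of_card (by rw [cik]; simp)
    have n6 : ({k} : Finset (Fin N)) ≠ {i, j} := ne_of_card (by rw [cij]; simp)
    simp only [hset, n1, n2, n4, n5, n6, wB, wC, extMap, hi, hj, hk,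
      Finset.card_singleton, if_true, if_false, reduceIte, if_pos, if_neg]
    norm_num
    try ring
    try (field_simp; ring)
  · have hset : ({i, j, k} : Finset (Fin N)) ∩ E.1 = ∅ := by
      rw [← Finset.filter_mem_eq_inter]
      simp [Finset.filter_insert, Finset.filter_singleton, hi, hj, hk]
    have n1 : (∅ : Finset (Fin N)) ≠ {i} := ne_of_card (by simp)
    have n2 : (∅ : Finset (Fin N)) ≠ {j} := ne_of_card (by simp)
    have n3 : (∅ : Finset (Fin N)) ≠ {k} := ne_of_card (by simp)
    have n4 : (∅ : Finset (Fin N)) ≠ {j, k} := ne_of_card (by rw [cjk]; simp)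
    have n5 : (∅ : Finset (Fin N)) ≠ {i, k} := ne_of_card (by rw [cik]; simp)
    have n6 : (∅ : Finset (Fin N)) ≠ {i, j} := ne_of_card (by rw [cij]; simp)
    simp only [hset, n1, n2, n3, n4, n5, n6, wB, wC, extMap, hi, hj, hk,
      Finset.card_empty, if_true, if_false, reduceIte, if_pos, if_neg]
    norm_num
    try ring
    try (field_simp; ring)

lemma phi3_diag1 (π : (Fin N → Fin n) → ℝ) (a b : Fin N) : phi3 π a a b = phi2 π a b :=
  Finset.sum_congr rfl fun x _ => by simp

lemma phi3_diag2 (π : (Fin N → Fin n) → ℝ) (a b : Fin N) : phi3 π a b a = phi2 π a b := by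
  refine Finset.sum_congr rfl fun x _ => ?_
  congr 1
  exact if_congr ⟨fun h => h.1, fun h => ⟨h, h.symm⟩⟩ rfl rfl

lemma phi3_diag3 (π : (Fin N → Fin n) → ℝ) (a b : Fin N) : phi3 π a b b = phi2 π a b :=
  Finset.sum_congr rfl fun x _ => by simp

lemma tripleRHS_sub (p : Event N → ℝ) (u : ℝ) (φ2 : Fin N → Fin N → ℝ)
    (ψ χ : Fin N → Fin N → Fin N → ℝ) (i j k : Fin N) :
    tripleRHS n p u φ2 ψ i j k - tripleRHS n p u φ2 χ i j k
    = ∑ E : Event N,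
        p E * (1-u)^((({i, j, k} : Finset (Fin N)) ∩ E.1).card) *
          (ψ (extMap E i) (extMap E j) (extMap E k)
            - χ (extMap E i) (extMap E j) (extMap E k)) := by
  have h : (∑ E : Event N,
        p E * (1-u)^((({i, j, k} : Finset (Fin N)) ∩ E.1).card) *
          (ψ (extMap E i) (extMap E j) (extMap E k)
            - χ (extMap E i) (extMap E j) (extMap E k)))
      = (∑ E : Event N, p E * (1-u)^((({i, j, k} : Finset (Fin N)) ∩ E.1).card) *
          ψ (extMap E i) (extMap E j) (extMap E k))
        - ∑ E : Event N, p E * (1-u)^((({i, j, k} : Finset (Fin N)) ∩ E.1).card) *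
          χ (extMap E i) (extMap E j) (extMap E k) := by
    rw [← Finset.sum_sub_distrib]
    exact Finset.sum_congr rfl fun E _ => by ring
  rw [h]
  unfold tripleRHS
  ring

lemma foldr_fix {N : ℕ} (a : Fin N) :
    ∀ (L : List (Fin N → Fin N)), (∀ f ∈ L, f a = a) →
      (L.foldr (· ∘ ·) id) a = a := by
  intro L
  induction L with
  | nil => intro _; rfl
  | cons f t ih =>
    intro h
    have h1 : f a = a := h f List.mem_cons_self
    have h2 : (t.foldr (· ∘ ·) id) a = a := ih fun g hg => h g (List.mem_cons_of_mem f hg)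
    simp only [List.foldr_cons, Function.comp_apply, h2, h1]


/-- The triple identity-by-state probabilities satisfy the stated
recurrence, and together with the pairwise probabilities they are uniquely
determined by it. -/
theorem stmt4 {N n : ℕ} (hN : 1 ≤ N) (hn : 1 ≤ n)
    (p : Event N → ℝ) (hp : IsDist p) (hfix : FixationAxiom p)
    (u : ℝ) (hu0 : 0 < u) (hu1 : u ≤ 1)
    (π : (Fin N → Fin n) → ℝ)
    (hπ : IsStationary (transMat N n p u) π)
    (huniq : ∀ π', IsStationary (transMat N n p u) π' → π' = π) :
    (∀ i j k : Fin N, i ≠ j → i ≠ k → j ≠ k →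
        phi3 π i j k = tripleRHS n p u (phi2 π) (phi3 π) i j k) ∧
    (∀ ψ : Fin N → Fin N → Fin N → ℝ,
        (∀ a b, ψ a a b = phi2 π a b) →
        (∀ a b, ψ a b a = phi2 π a b) →
        (∀ a b, ψ a b b = phi2 π a b) →
        (∀ i j k : Fin N, i ≠ j → i ≠ k → j ≠ k →
          ψ i j k = tripleRHS n p u (phi2 π) ψ i j k) →
        ψ = fun i j k => phi3 π i j k) := by
  have hrec : ∀ i j k : Fin N, i ≠ j → i ≠ k → j ≠ k →
      phi3 π i j k = tripleRHS n p u (phi2 π) (phi3 π) i j k := by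
    intro i j k hij hik hjk
    rw [key_rec hn p u π hπ.1.2 hπ.2 hij hik hjk,
      sum_W_eq hn p u (phi2 π) (phi3 π) hij hik hjk]
  refine ⟨hrec, ?_⟩
  intro ψ hd1 hd2 hd3 hψ
  set δ : Fin N → Fin N → Fin N → ℝ := fun a b c => ψ a b c - phi3 π a b c with hδ
  have hδ0 : ∀ a b c : Fin N, (a = b ∨ a = c ∨ b = c) → δ a b c = 0 := by
    intro a b c h
    rcases h with h | h | h
    · subst h; simp [hδ, hd1, phi3_diag1]
    · subst h; simp [hδ, hd2, phi3_diag2]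
    · subst h; simp [hδ, hd3, phi3_diag3]
  have hδrec : ∀ i j k : Fin N, i ≠ j → i ≠ k → j ≠ k →
      δ i j k = ∑ E : Event N,
        p E * (1-u)^((({i, j, k} : Finset (Fin N)) ∩ E.1).card) *
          δ (extMap E i) (extMap E j) (extMap E k) := by
    intro i j k hij hik hjk
    have := tripleRHS_sub (n := n) p u (phi2 π) ψ (fun a b c => phi3 π a b c) i j k
    simp only [hδ]
    rw [hψ i j k hij hik hjk, hrec i j k hij hik hjk]
    exact this
  -- maximization
  have hne : (univ : Finset (Fin N × Fin N × Fin N)).Nonempty :=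
    ⟨(⟨0, hN⟩, ⟨0, hN⟩, ⟨0, hN⟩), Finset.mem_univ _⟩
  obtain ⟨v, -, hv⟩ := Finset.exists_max_image (univ : Finset (Fin N × Fin N × Fin N))
    (fun v => |δ v.1 v.2.1 v.2.2|) hne
  set a := v.1; set b := v.2.1; set c := v.2.2
  set M := |δ a b c| with hMdef
  have hM0 : 0 ≤ M := abs_nonneg _
  have hMax : ∀ x y z : Fin N, |δ x y z| ≤ M := fun x y z => hv (x, y, z) (Finset.mem_univ _)
  have hMzero : M = 0 := by
    by_contra hM
    have hMpos : 0 < M := lt_of_le_of_ne hM0 (Ne.symm hM)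
    have hab : a ≠ b := by
      intro h; rw [hMdef, hδ0 a b c (Or.inl h), abs_zero] at hMpos; exact lt_irrefl _ hMpos
    have hac : a ≠ c := by
      intro h; rw [hMdef, hδ0 a b c (Or.inr (Or.inl h)), abs_zero] at hMpos
      exact lt_irrefl _ hMpos
    have hbc : b ≠ c := by
      intro h; rw [hMdef, hδ0 a b c (Or.inr (Or.inr h)), abs_zero] at hMpos
      exact lt_irrefl _ hMpos
    have h1u0 : 0 ≤ 1 - u := by linarith
    have h1u1 : 1 - u < 1 := by linarith
    have hw1 : ∀ E : Event N,
        (1-u)^((({a, b, c} : Finset (Fin N)) ∩ E.1).card) ≤ 1 :=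
      fun E => pow_le_one₀ h1u0 (by linarith)
    have hw0 : ∀ E : Event N,
        0 ≤ (1-u)^((({a, b, c} : Finset (Fin N)) ∩ E.1).card) :=
      fun E => pow_nonneg h1u0 _
    -- the chain of inequalities
    have step1 : M ≤ ∑ E : Event N,
        p E * (1-u)^((({a, b, c} : Finset (Fin N)) ∩ E.1).card) * M := by
      have e1 : δ a b c = ∑ E : Event N,
          p E * (1-u)^((({a, b, c} : Finset (Fin N)) ∩ E.1).card) *
            δ (extMap E a) (extMap E b) (extMap E c) := hδrec a b c hab hac hbc
      calc M = |δ a b c| := hMdef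
        _ = |∑ E : Event N, p E * (1-u)^((({a, b, c} : Finset (Fin N)) ∩ E.1).card) *
              δ (extMap E a) (extMap E b) (extMap E c)| := by rw [e1]
        _
          ≤ ∑ E : Event N, |p E * (1-u)^((({a, b, c} : Finset (Fin N)) ∩ E.1).card) *
              δ (extMap E a) (extMap E b) (extMap E c)| := Finset.abs_sum_le_sum_abs _ _
        _ ≤ ∑ E : Event N, p E * (1-u)^((({a, b, c} : Finset (Fin N)) ∩ E.1).card) * M := by
            refine Finset.sum_le_sum fun E _ => ?_
            rw [abs_mul, abs_mul, abs_of_nonneg (hp.1 E), abs_of_nonneg (hw0 E)]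
            exact mul_le_mul_of_nonneg_left (hMax _ _ _)
              (mul_nonneg (hp.1 E) (hw0 E))
    have step2 : ∑ E : Event N,
        p E * (1-u)^((({a, b, c} : Finset (Fin N)) ∩ E.1).card) * M
        ≤ ∑ E : Event N, p E * M := by
      refine Finset.sum_le_sum fun E _ => ?_
      rw [mul_assoc]
      refine mul_le_mul_of_nonneg_left ?_ (hp.1 E)
      calc (1-u)^((({a, b, c} : Finset (Fin N)) ∩ E.1).card) * M ≤ 1 * M :=
            mul_le_mul_of_nonneg_right (hw1 E) hM0
        _ = M := one_mul M
    have hsumpM : ∑ E : Event N, p E * M = M := by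
      rw [← Finset.sum_mul, hp.2, one_mul]
    have hzero : ∀ E : Event N,
        p E * (1 - (1-u)^((({a, b, c} : Finset (Fin N)) ∩ E.1).card)) * M = 0 := by
      have hsum : ∑ E : Event N,
          p E * (1 - (1-u)^((({a, b, c} : Finset (Fin N)) ∩ E.1).card)) * M = 0 := by
        have : ∑ E : Event N,
            p E * (1 - (1-u)^((({a, b, c} : Finset (Fin N)) ∩ E.1).card)) * M
            = (∑ E : Event N, p E * M) - ∑ E : Event N,
                p E * (1-u)^((({a, b, c} : Finset (Fin N)) ∩ E.1).card) * M := by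
          rw [← Finset.sum_sub_distrib]
          exact Finset.sum_congr rfl fun E _ => by ring
        rw [this, hsumpM]
        linarith [step1, step2, hsumpM]
      intro E
      refine (Finset.sum_eq_zero_iff_of_nonneg fun F _ => ?_).mp hsum E (Finset.mem_univ E)
      have h1 : 0 ≤ 1 - (1-u)^((({a, b, c} : Finset (Fin N)) ∩ F.1).card) := by
        linarith [hw1 F]
      have h2 : 0 ≤ p F := hp.1 F
      positivity
    -- apply to chain events
    obtain ⟨i0, m, Ev, hm, hpos, -, hcomp⟩ := hfix
    have hfixE : ∀ t : Fin m, extMap (Ev t) a = a ∧ extMap (Ev t) b = b := by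
      intro t
      have hz := hzero (Ev t)
      have hcard : ((({a, b, c} : Finset (Fin N)) ∩ (Ev t).1).card) = 0 := by
        by_contra hc
        have hc1 : 1 ≤ (({a, b, c} : Finset (Fin N)) ∩ (Ev t).1).card := Nat.one_le_iff_ne_zero.mpr hc
        have hlt : (1-u)^((({a, b, c} : Finset (Fin N)) ∩ (Ev t).1).card) < 1 :=
          pow_lt_one₀ h1u0 h1u1 (by omega)
        have : 0 < p (Ev t) * (1 - (1-u)^((({a, b, c} : Finset (Fin N)) ∩ (Ev t).1).card)) * M := by
          apply mul_pos (mul_pos (hpos t) (by linarith)) hMpos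
        linarith [hz]
      have hempty : ({a, b, c} : Finset (Fin N)) ∩ (Ev t).1 = ∅ := Finset.card_eq_zero.mp hcard
      constructor
      · have ha : a ∉ (Ev t).1 := by
          intro hmem
          have : a ∈ ({a, b, c} : Finset (Fin N)) ∩ (Ev t).1 :=
            Finset.mem_inter.mpr ⟨by simp, hmem⟩
          rw [hempty] at this; exact absurd this (Finset.notMem_empty a)
        simp [extMap, ha]
      · have hb : b ∉ (Ev t).1 := by
          intro hmem
          have : b ∈ ({a, b, c} : Finset (Fin N)) ∩ (Ev t).1 :=
            Finset.mem_inter.mpr ⟨by simp, hmem⟩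
          rw [hempty] at this; exact absurd this (Finset.notMem_empty b)
        simp [extMap, hb]
    have hfolda : ((List.ofFn (fun t => extMap (Ev t))).foldr (· ∘ ·) id) a = a := by
      refine foldr_fix a _ fun f hf => ?_
      obtain ⟨t, rfl⟩ := List.mem_ofFn.mp hf
      exact (hfixE t).1
    have hfoldb : ((List.ofFn (fun t => extMap (Ev t))).foldr (· ∘ ·) id) b = b := by
      refine foldr_fix b _ fun f hf => ?_
      obtain ⟨t, rfl⟩ := List.mem_ofFn.mp hf
      exact (hfixE t).2
    have ha' : a = i0 := by rw [← hcomp a]; exact hfolda.symm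
    have hb' : b = i0 := by rw [← hcomp b]; exact hfoldb.symm
    exact hab (ha'.trans hb'.symm)
  funext x y z
  have : |δ x y z| ≤ 0 := hMzero ▸ hMax x y z
  have hz : δ x y z = 0 := abs_eq_zero.mp (le_antisymm this (abs_nonneg _))
  have := sub_eq_zero.mp hz
  simpa using this

end SCT
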